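/- Let M₁, M₂, N₁, N₂ be positive integers with N := N₁·N₂ = M₁·M₂, let F be the quantum Fourier transform matrix F (j,k) (l,m) = exp(2πi·(j·N₂ + k)·(l·M₂ + m)/N)/√N, and let F^R be its realignment. Then F is maximally entangled — that is, all nonzero singular values of F^R are equal, equivalently there exists c > 0 with F^R * (F^R)ᴴ * F^R = (c : ℂ) • F^R — if and only if (M₁ ∣ N₂ or N₂ < M₁) and (N₁ ∣ M₂ or M₂ < N₁). -/

import Mathlib

open Matrix Complex

/-- The quantum Fourier transform `𝓕_{M₁M₂ → N₁N₂}` as a matrix, with `N = N₁N₂ = M₁M₂`. -/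
noncomputable def QFT (M₁ M₂ N₁ N₂ : ℕ) : Matrix (Fin N₁ × Fin N₂) (Fin M₁ × Fin M₂) ℂ :=
  fun p q => Complex.exp (2 * Real.pi * Complex.I *
      (((p.1.val : ℂ) * N₂ + p.2.val) * ((q.1.val : ℂ) * M₂ + q.2.val)) / (N₁ * N₂)) /
    Real.sqrt (N₁ * N₂)

/-- The realignment `M^R (i,k) (j,l) = M (i,j) (k,l)`. -/
def realign {I J K L : Type*} (M : Matrix (I × J) (K × L) ℂ) : Matrix (I × K) (J × L) ℂ :=
  fun p q => M (p.1, q.1) (p.2, q.2)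

section aux
open Finset

/-- number of `x < b` congruent to `m` mod `a` -/
def cnt (a b m : ℕ) : ℕ :=
  ((Finset.range b).filter (fun x : ℕ => (a : ℤ) ∣ (m : ℤ) - (x : ℤ))).card

lemma cnt_formula (a b m : ℕ) (ha : 0 < a) (hm : m < b) :
    cnt a b m = (b - 1 - m % a) / a + 1 := by
  classical
  rw [cnt, ← Finset.card_range ((b - 1 - m % a) / a + 1)]
  refine (Finset.card_bij (fun x _ => m % a + a * x) ?_ ?_ ?_).symm
  · intro t ht
    show m % a + a * t ∈ _
    rw [Finset.mem_range] at ht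
    have ht' : t ≤ (b - 1 - m % a) / a := by omega
    have h1 : a * t ≤ b - 1 - m % a := by
      calc a * t ≤ a * ((b - 1 - m % a) / a) := Nat.mul_le_mul_left a ht'
        _ ≤ b - 1 - m % a := Nat.mul_div_le _ _
    have hma : m % a ≤ m := Nat.mod_le m a
    rw [Finset.mem_filter, Finset.mem_range]
    refine ⟨by omega, ?_⟩
    have hmeq : (m % a + a * t) ≡ m [MOD a] := by
      show (m % a + a * t) % a = m % a
      rw [Nat.add_mul_mod_self_left, Nat.mod_mod_of_dvd _ dvd_rfl]
    exact hmeq.dvd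
  · intro t ht t' ht' h
    exact Nat.eq_of_mul_eq_mul_left ha (Nat.add_left_cancel h)
  · intro x hx
    rw [Finset.mem_filter, Finset.mem_range] at hx
    obtain ⟨hxb, hdvd⟩ := hx
    have hmod : x % a = m % a := Nat.modEq_iff_dvd.mpr hdvd
    refine ⟨x / a, ?_, ?_⟩
    · rw [Finset.mem_range]
      have h1 := Nat.mod_add_div x a
      have hxm : x % a ≤ x := Nat.mod_le x a
      have hcomm : x / a * a = a * (x / a) := Nat.mul_comm _ _
      have : x / a ≤ (b - 1 - m % a) / a :=
        Nat.le_div_iff_mul_le ha |>.mpr (by omega)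
      omega
    · show m % a + a * (x / a) = x
      have := Nat.mod_add_div x a
      omega

lemma cnt_pos (a b m : ℕ) (hm : m < b) : 0 < cnt a b m := by
  rw [cnt, Finset.card_pos]
  exact ⟨m, Finset.mem_filter.mpr ⟨Finset.mem_range.mpr hm, by simp⟩⟩

lemma cnt_const_iff (a b : ℕ) (ha : 0 < a) (hb : 0 < b) :
    (∀ m : ℕ, m < b → cnt a b m = cnt a b 0) ↔ (a ∣ b ∨ b < a) := by
  constructor
  · intro h
    by_contra hc
    push_neg at hc
    obtain ⟨hnd, hab⟩ := hc
    have hab' : a ≤ b := hab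
    set q := b / a with hq
    set r := b % a with hr
    have hbr : q * a + r = b := by rw [hq, hr, Nat.mul_comm]; exact Nat.div_add_mod b a
    have hr0 : 0 < r := Nat.pos_of_ne_zero (fun h0 => hnd (Nat.dvd_of_mod_eq_zero h0))
    have hra : r < a := Nat.mod_lt b ha
    have hq1 : 1 ≤ q := Nat.one_le_div_iff ha |>.mpr hab'
    have haq : a ≤ q * a := by
      calc a = 1 * a := (one_mul a).symm
        _ ≤ q * a := Nat.mul_le_mul_right a hq1
    have hrb : r < b := by omega
    have h1 := h r hrb
    rw [cnt_formula a b r ha hrb, cnt_formula a b 0 ha hb] at h1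
    rw [Nat.mod_eq_of_lt hra, Nat.zero_mod, Nat.sub_zero] at h1
    have hmul1 : (q - 1) * a = q * a - a := by rw [Nat.sub_mul, one_mul]
    have hmul2 : (q - 1 + 1) * a = q * a := by rw [Nat.sub_add_cancel hq1]
    have hmul3 : (q + 1) * a = q * a + a := by rw [Nat.add_mul, one_mul]
    have e1 : (b - 1 - r) / a = q - 1 := Nat.div_eq_of_lt_le (by omega) (by omega)
    have e2 : (b - 1) / a = q := Nat.div_eq_of_lt_le (by omega) (by omega)
    omega
  · intro h m hm
    rw [cnt_formula a b m ha hm, cnt_formula a b 0 ha hb, Nat.zero_mod, Nat.sub_zero]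
    rcases h with h | h
    · obtain ⟨q, hq⟩ := h
      have hq1 : 1 ≤ q := by
        by_contra h0
        push_neg at h0
        interval_cases q
        omega
      have hma : m % a < a := Nat.mod_lt m ha
      have hqa : a * q = q * a := Nat.mul_comm a q
      have haq : a ≤ q * a := by
        calc a = 1 * a := (one_mul a).symm
          _ ≤ q * a := Nat.mul_le_mul_right a hq1
      have hmul1 : (q - 1) * a = q * a - a := by rw [Nat.sub_mul, one_mul]
      have hmul2 : (q - 1 + 1) * a = q * a := by rw [Nat.sub_add_cancel hq1]
      have e1 : (b - 1 - m % a) / a = q - 1 := Nat.div_eq_of_lt_le (by omega) (by omega)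
      have e2 : (b - 1) / a = q - 1 := Nat.div_eq_of_lt_le (by omega) (by omega)
      rw [e1, e2]
    · have hma : m % a = m := Nat.mod_eq_of_lt (lt_of_lt_of_le hm (le_of_lt h))
      rw [hma, Nat.div_eq_of_lt (by omega), Nat.div_eq_of_lt (by omega)]

lemma zpmul (a : ℂ) (m n : ℤ) : a ^ (m * n) = (a ^ m) ^ n := zpow_mul a m n

section entries
variable (M₁ M₂ N₁ N₂ : ℕ)

noncomputable def rt (N : ℕ) : ℂ := Complex.exp (2 * Real.pi * Complex.I / N)

lemma rt_ne_zero (N : ℕ) : rt N ≠ 0 := Complex.exp_ne_zero _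

lemma rt_pow_self (N : ℕ) (hN : 0 < N) : rt N ^ ((N : ℕ) : ℤ) = 1 := by
  rw [zpow_natCast, rt, ← Complex.exp_nat_mul]
  have hN0 : (N : ℂ) ≠ 0 := Nat.cast_ne_zero.mpr hN.ne'
  have : (N : ℂ) * (2 * Real.pi * Complex.I / N) = 2 * Real.pi * Complex.I := by
    rw [mul_comm ((N:ℂ)) (2 * Real.pi * Complex.I / N), div_mul_cancel₀ _ hN0]
  rw [this, Complex.exp_two_pi_mul_I]

lemma rt_pow_mul_self (N : ℕ) (hN : 0 < N) (z : ℤ) : rt N ^ ((N : ℤ) * z) = 1 := by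
  rw [zpmul, rt_pow_self N hN, _root_.one_zpow]

/-- entry formula for the realigned QFT -/
lemma realign_apply (j : Fin N₁) (l : Fin M₁) (k : Fin N₂) (m : Fin M₂) :
    realign (QFT M₁ M₂ N₁ N₂) (j, l) (k, m) =
      rt (N₁ * N₂) ^ ((((j : ℕ) : ℤ) * N₂ + (k : ℕ)) * (((l : ℕ) : ℤ) * M₂ + (m : ℕ))) /
        (Real.sqrt (N₁ * N₂) : ℂ) := by
  have h1 : (((j : ℕ) : ℂ) * N₂ + (k : ℕ)) * (((l : ℕ) : ℂ) * M₂ + (m : ℕ)) =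
      (((((j : ℕ) : ℤ) * N₂ + (k : ℕ)) * (((l : ℕ) : ℤ) * M₂ + (m : ℕ)) : ℤ) : ℂ) := by
    push_cast; ring
  simp only [realign, QFT]
  congr 1
  rw [h1]
  have h2 : 2 * Real.pi * Complex.I *
      ((((((j : ℕ) : ℤ) * N₂ + (k : ℕ)) * (((l : ℕ) : ℤ) * M₂ + (m : ℕ)) : ℤ) : ℂ)) / (N₁ * N₂) =
      ((((((j : ℕ) : ℤ) * N₂ + (k : ℕ)) * (((l : ℕ) : ℤ) * M₂ + (m : ℕ)) : ℤ) : ℂ)) *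
        (2 * Real.pi * Complex.I / ((N₁ * N₂ : ℕ) : ℂ)) := by
    push_cast; ring
  rw [h2, Complex.exp_int_mul, rt]

end entries

lemma rt_conj (N : ℕ) : (starRingEnd ℂ) (rt N) = (rt N)⁻¹ := by
  rw [rt, ← Complex.exp_conj, ← Complex.exp_neg]
  congr 1
  simp [map_div₀, Complex.conj_I, map_ofNat]
  ring

lemma conj_entry (N : ℕ) (e : ℤ) (s : ℝ) :
    (starRingEnd ℂ) (rt N ^ e / (s : ℂ)) = rt N ^ (-e) / (s : ℂ) := by
  rw [map_div₀, Complex.conj_ofReal, map_zpow₀, rt_conj, _root_.inv_zpow, ← _root_.zpow_neg]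

lemma rt_pow_factor (N n q : ℕ) (hn : 0 < n) (hq : 0 < q) (hN : N = n * q) :
    rt N ^ ((q : ℕ) : ℤ) = rt n := by
  subst hN
  rw [zpow_natCast, rt, rt, ← Complex.exp_nat_mul]
  congr 1
  have hn0 : (n : ℂ) ≠ 0 := Nat.cast_ne_zero.mpr hn.ne'
  have hq0 : (q : ℂ) ≠ 0 := Nat.cast_ne_zero.mpr hq.ne'
  field_simp
  push_cast
  ring

/-- sum of the indicator times a trivialized phase -/
lemma sum_indicator (N n q b : ℕ) (hn : 0 < n) (hq : 0 < q) (hN : N = n * q) (j m : ℕ) :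
    ∑ x : Fin b, rt N ^ (((q : ℤ) * j) * ((x : ℕ) - (m : ℤ))) *
        (if (n : ℤ) ∣ (m : ℤ) - (x : ℕ) then (n : ℂ) else 0) =
      ((n * cnt n b m : ℕ) : ℂ) := by
  have hterm : ∀ x : Fin b, rt N ^ (((q : ℤ) * j) * ((x : ℕ) - (m : ℤ))) *
      (if (n : ℤ) ∣ (m : ℤ) - (x : ℕ) then (n : ℂ) else 0) =
      (if (n : ℤ) ∣ (m : ℤ) - (x : ℕ) then (n : ℂ) else 0) := by
    intro x
    by_cases h : (n : ℤ) ∣ (m : ℤ) - (x : ℕ)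
    · obtain ⟨t, ht⟩ := h
      have hx : ((x : ℕ) : ℤ) - (m : ℤ) = n * (-t) := by rw [mul_neg, ← ht]; ring
      have he : ((q : ℤ) * j) * ((x : ℕ) - (m : ℤ)) = (N : ℤ) * (j * (-t)) := by
        rw [hx, hN]; push_cast; ring
      rw [he, rt_pow_mul_self N (hN ▸ Nat.mul_pos hn hq) _, one_mul]
    · simp [h]
  rw [Finset.sum_congr rfl (fun x _ => hterm x)]
  rw [Fin.sum_univ_eq_sum_range (fun x => if (n : ℤ) ∣ (m : ℤ) - (x : ℕ) then (n : ℂ) else 0)]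
  rw [Finset.sum_ite, Finset.sum_const, Finset.sum_const_zero, add_zero, cnt]
  push_cast
  rw [nsmul_eq_mul]
  ring

lemma sum_root' (n : ℕ) (hn : 0 < n) (d : ℤ) :
    ∑ x : Fin n, rt n ^ (d * (x : ℕ)) = if (n : ℤ) ∣ d then (n : ℂ) else 0 := by
  set ζ : ℂ := rt n with hζ
  have hprim : IsPrimitiveRoot ζ n := Complex.isPrimitiveRoot_exp n hn.ne'
  set z : ℂ := ζ ^ d with hz
  have hterm : ∀ x : ℕ, ζ ^ (d * (x : ℤ)) = z ^ x := by
    intro x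
    rw [hz, ← zpow_natCast (ζ ^ d) x, ← zpmul]
  have hzn : z ^ n = 1 := by
    rw [hz, ← zpow_natCast (ζ ^ d) n, ← zpmul, mul_comm, zpmul, zpow_natCast,
      hprim.pow_eq_one, _root_.one_zpow]
  have hz1 : z = 1 ↔ (n : ℤ) ∣ d := by
    rw [hz]; exact hprim.zpow_eq_one_iff_dvd d
  have hsum : ∑ x : Fin n, ζ ^ (d * ((x : ℕ) : ℤ)) = ∑ x ∈ Finset.range n, z ^ x := by
    rw [Finset.sum_range fun x => z ^ x]
    exact Finset.sum_congr rfl fun x _ => hterm x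
  rw [hsum]
  by_cases h : z = 1
  · simp [h, hz1.mp h]
  · rw [if_neg (fun hd => h (hz1.mpr hd)), geom_sum_eq h, hzn]
    simp

lemma double_sum (N n q b : ℕ) (hn : 0 < n) (hq : 0 < q) (hN : N = n * q) (j m : ℕ) :
    ∑ p : Fin n × Fin b,
        rt N ^ (((q : ℤ) * j) * (((p.2 : ℕ) : ℤ) - (m : ℤ))) *
          rt n ^ (((m : ℤ) - ((p.2 : ℕ) : ℤ)) * ((p.1 : ℕ) : ℤ)) =
      ((n * cnt n b m : ℕ) : ℂ) := by
  rw [Fintype.sum_prod_type_right]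
  -- now : ∑ x : Fin b, ∑ a : Fin n, ...
  have hinner : ∀ x : Fin b,
      (∑ a : Fin n, rt N ^ (((q : ℤ) * j) * (((x : ℕ) : ℤ) - (m : ℤ))) *
          rt n ^ (((m : ℤ) - ((x : ℕ) : ℤ)) * ((a : ℕ) : ℤ))) =
      rt N ^ (((q : ℤ) * j) * (((x : ℕ) : ℤ) - (m : ℤ))) *
        (if (n : ℤ) ∣ (m : ℤ) - ((x : ℕ) : ℤ) then (n : ℂ) else 0) := by
    intro x
    rw [← Finset.mul_sum]
    congr 1
    exact sum_root' n hn ((m : ℤ) - ((x : ℕ) : ℤ))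
  rw [Finset.sum_congr rfl (fun x _ => hinner x)]
  exact sum_indicator N n q b hn hq hN j m

lemma term_identity (ω : ℂ) (hω : ω ≠ 0) (s : ℂ) (a b c e A P B Q : ℤ)
    (hExp : a + -b + c = e + (A + P + (B + Q))) :
    (ω ^ a / s) * (ω ^ (-b) / s) * (ω ^ c / s) =
      (ω ^ e / s ^ 3) * ((ω ^ A * ω ^ P) * (ω ^ B * ω ^ Q)) := by
  rw [div_mul_div_comm, div_mul_div_comm, ← zpow_add₀ hω, ← zpow_add₀ hω,
    ← zpow_add₀ hω A P, ← zpow_add₀ hω B Q, ← zpow_add₀ hω (A + P) (B + Q),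
    div_mul_eq_mul_div, ← zpow_add₀ hω, hExp]
  congr 1
  ring

lemma sum_swap_factor {A B C D : Type*} [Fintype A] [Fintype B] [Fintype C] [Fintype D]
    (F : A × D → ℂ) (G : B × C → ℂ) :
    ∑ y : A × B, ∑ x : C × D, F (y.1, x.2) * G (y.2, x.1) =
      (∑ p : A × D, F p) * (∑ q : B × C, G q) := by
  have h1 : ∑ y : A × B, ∑ x : C × D, F (y.1, x.2) * G (y.2, x.1) =
      ∑ z : (A × B) × (C × D), F (z.1.1, z.2.2) * G (z.1.2, z.2.1) :=
    (Fintype.sum_prod_type (fun z : (A × B) × (C × D) =>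
      F (z.1.1, z.2.2) * G (z.1.2, z.2.1))).symm
  rw [h1]
  let e : (A × D) × (B × C) ≃ (A × B) × (C × D) :=
    ⟨fun w => ((w.1.1, w.2.1), (w.2.2, w.1.2)), fun z => ((z.1.1, z.2.2), (z.1.2, z.2.1)),
      fun w => rfl, fun z => rfl⟩
  rw [← Fintype.sum_equiv e (fun w => F w.1 * G w.2)
      (fun z => F (z.1.1, z.2.2) * G (z.1.2, z.2.1)) (fun ⟨⟨a,d⟩,⟨b,c⟩⟩ => rfl)]
  rw [Fintype.sum_prod_type, ← Finset.sum_mul_sum]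

lemma key (M₁ M₂ N₁ N₂ : ℕ) (hM₁ : 0 < M₁) (hM₂ : 0 < M₂) (hN₁ : 0 < N₁) (hN₂ : 0 < N₂)
    (hN : N₁ * N₂ = M₁ * M₂) (j : Fin N₁) (l : Fin M₁) (k : Fin N₂) (m : Fin M₂) :
    (realign (QFT M₁ M₂ N₁ N₂) * (realign (QFT M₁ M₂ N₁ N₂))ᴴ * realign (QFT M₁ M₂ N₁ N₂))
        (j, l) (k, m) =
      (((N₁ * cnt N₁ M₂ m) * (M₁ * cnt M₁ N₂ k) : ℕ) : ℂ) / ((N₁ * N₂ : ℕ) : ℂ) *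
        realign (QFT M₁ M₂ N₁ N₂) (j, l) (k, m) := by
  have hω0 : rt (N₁ * N₂) ≠ 0 := rt_ne_zero _
  set F : Fin N₁ × Fin M₂ → ℂ := fun p =>
    rt (N₁ * N₂) ^ (((N₂ : ℤ) * (j : ℕ)) * (((p.2 : ℕ) : ℤ) - ((m : ℕ) : ℤ))) *
      rt N₁ ^ ((((m : ℕ) : ℤ) - ((p.2 : ℕ) : ℤ)) * ((p.1 : ℕ) : ℤ)) with hF
  set G : Fin M₁ × Fin N₂ → ℂ := fun p =>
    rt (N₁ * N₂) ^ (((M₂ : ℤ) * (l : ℕ)) * (((p.2 : ℕ) : ℤ) - ((k : ℕ) : ℤ))) *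
      rt M₁ ^ ((((k : ℕ) : ℤ) - (((p.2 : ℕ)) : ℤ)) * ((p.1 : ℕ) : ℤ)) with hG
  have hterm : ∀ (y : Fin N₁ × Fin M₁) (x : Fin N₂ × Fin M₂),
      realign (QFT M₁ M₂ N₁ N₂) (j, l) x *
          (starRingEnd ℂ) (realign (QFT M₁ M₂ N₁ N₂) y x) *
          realign (QFT M₁ M₂ N₁ N₂) y (k, m) =
        (rt (N₁ * N₂) ^ ((((j : ℕ) : ℤ) * N₂ + (k : ℕ)) * (((l : ℕ) : ℤ) * M₂ + (m : ℕ))) /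
            (Real.sqrt (N₁ * N₂) : ℂ) ^ 3) * (F (y.1, x.2) * G (y.2, x.1)) := by
    rintro ⟨j', l'⟩ ⟨k', m'⟩
    rw [realign_apply M₁ M₂ N₁ N₂ j l k' m', realign_apply M₁ M₂ N₁ N₂ j' l' k' m',
      realign_apply M₁ M₂ N₁ N₂ j' l' k m, conj_entry]
    simp only [hF, hG]
    rw [← rt_pow_factor (N₁ * N₂) N₁ N₂ hN₁ hN₂ rfl,
      ← rt_pow_factor (N₁ * N₂) M₁ M₂ hM₁ hM₂ hN, ← zpmul, ← zpmul]
    exact term_identity _ hω0 _ _ _ _ _ _ _ _ _ (by ring)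
  rw [Matrix.mul_apply]
  simp only [Matrix.mul_apply, Matrix.conjTranspose_apply, Complex.star_def, Finset.sum_mul]
  simp only [hterm]
  simp only [← Finset.mul_sum]
  rw [sum_swap_factor F G]
  simp only [hF, hG]
  rw [double_sum (N₁ * N₂) N₁ N₂ M₂ hN₁ hN₂ rfl (j : ℕ) (m : ℕ),
    double_sum (N₁ * N₂) M₁ M₂ N₂ hM₁ hM₂ hN (l : ℕ) (k : ℕ)]
  rw [realign_apply M₁ M₂ N₁ N₂ j l k m]
  have hs0 : (Real.sqrt (N₁ * N₂) : ℂ) ≠ 0 := by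
    have h : (0:ℝ) < Real.sqrt ((N₁ : ℝ) * N₂) := Real.sqrt_pos.mpr (by positivity)
    exact Complex.ofReal_ne_zero.mpr h.ne'
  have hs2 : (Real.sqrt (N₁ * N₂) : ℂ) ^ 2 = ((N₁ : ℂ) * N₂) := by
    rw [← Complex.ofReal_pow, Real.sq_sqrt (by positivity)]
    push_cast
    ring
  have hN0 : ((N₁ * N₂ : ℕ) : ℂ) ≠ 0 :=
    Nat.cast_ne_zero.mpr (Nat.mul_pos hN₁ hN₂).ne'
  rw [show (Real.sqrt (N₁ * N₂) : ℂ) ^ 3 = ((N₁ : ℂ) * N₂) * (Real.sqrt (N₁ * N₂) : ℂ) from by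
    rw [pow_succ, hs2]]
  push_cast
  field_simp

end aux

/-- The quantum Fourier transform is maximally entangled (all nonzero singular values of
its realignment equal) iff `(M₁ ∣ N₂ or N₂ < M₁)` and `(N₁ ∣ M₂ or M₂ < N₁)`. -/
theorem stmt_15 (M₁ M₂ N₁ N₂ : ℕ) (hM₁ : 0 < M₁) (hM₂ : 0 < M₂) (hN₁ : 0 < N₁)
    (hN₂ : 0 < N₂) (hN : N₁ * N₂ = M₁ * M₂) :
    (∃ c : ℝ, 0 < c ∧
        realign (QFT M₁ M₂ N₁ N₂) * (realign (QFT M₁ M₂ N₁ N₂))ᴴ *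
            realign (QFT M₁ M₂ N₁ N₂) =
          (c : ℂ) • realign (QFT M₁ M₂ N₁ N₂)) ↔
      ((M₁ ∣ N₂ ∨ N₂ < M₁) ∧ (N₁ ∣ M₂ ∨ M₂ < N₁)) := by
  have hentry_ne : ∀ (j : Fin N₁) (l : Fin M₁) (k : Fin N₂) (m : Fin M₂),
      realign (QFT M₁ M₂ N₁ N₂) (j, l) (k, m) ≠ 0 := by
    intro j l k m
    rw [realign_apply]
    apply div_ne_zero (zpow_ne_zero _ (rt_ne_zero _))
    have h : (0:ℝ) < Real.sqrt ((N₁ : ℝ) * N₂) := Real.sqrt_pos.mpr (by positivity)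
    exact Complex.ofReal_ne_zero.mpr h.ne'
  have hN0 : ((N₁ * N₂ : ℕ) : ℂ) ≠ 0 :=
    Nat.cast_ne_zero.mpr (Nat.mul_pos hN₁ hN₂).ne'
  constructor
  · rintro ⟨c, hc, hEq⟩
    have hconst : ∀ (m m' : Fin M₂) (k k' : Fin N₂),
        (N₁ * cnt N₁ M₂ m) * (M₁ * cnt M₁ N₂ k) =
          (N₁ * cnt N₁ M₂ m') * (M₁ * cnt M₁ N₂ k') := by
      intro m m' k k'
      have hv : ∀ (m : Fin M₂) (k : Fin N₂),
          ((((N₁ * cnt N₁ M₂ m) * (M₁ * cnt M₁ N₂ k) : ℕ) : ℂ)) / ((N₁ * N₂ : ℕ) : ℂ)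
            = (c : ℂ) := by
        intro m k
        have j0 : Fin N₁ := ⟨0, hN₁⟩
        have l0 : Fin M₁ := ⟨0, hM₁⟩
        have h1 := congrFun (congrFun hEq (⟨0, hN₁⟩, ⟨0, hM₁⟩)) (k, m)
        rw [key M₁ M₂ N₁ N₂ hM₁ hM₂ hN₁ hN₂ hN ⟨0, hN₁⟩ ⟨0, hM₁⟩ k m,
          Matrix.smul_apply, smul_eq_mul] at h1
        exact mul_right_cancel₀ (hentry_ne _ _ _ _) h1
      have h2 := (hv m k).trans (hv m' k').symm
      rw [div_eq_div_iff hN0 hN0] at h2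
      have h3 := mul_right_cancel₀ hN0 h2
      exact_mod_cast h3
    constructor
    · -- M₁ ∣ N₂ ∨ N₂ < M₁ from cB constant
      rw [← cnt_const_iff M₁ N₂ hM₁ hN₂]
      intro kv hkv
      have h := hconst ⟨0, hM₂⟩ ⟨0, hM₂⟩ ⟨kv, hkv⟩ ⟨0, hN₂⟩
      have hA : 0 < N₁ * cnt N₁ M₂ (⟨0, hM₂⟩ : Fin M₂) :=
        Nat.mul_pos hN₁ (cnt_pos _ _ _ hM₂)
      have h4 : M₁ * cnt M₁ N₂ kv = M₁ * cnt M₁ N₂ 0 :=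
        Nat.eq_of_mul_eq_mul_left hA h
      exact Nat.eq_of_mul_eq_mul_left hM₁ h4
    · rw [← cnt_const_iff N₁ M₂ hN₁ hM₂]
      intro mv hmv
      have h := hconst ⟨mv, hmv⟩ ⟨0, hM₂⟩ ⟨0, hN₂⟩ ⟨0, hN₂⟩
      have hB : 0 < M₁ * cnt M₁ N₂ (⟨0, hN₂⟩ : Fin N₂) :=
        Nat.mul_pos hM₁ (cnt_pos _ _ _ hN₂)
      have h4 : N₁ * cnt N₁ M₂ mv = N₁ * cnt N₁ M₂ 0 :=
        Nat.eq_of_mul_eq_mul_right hB h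
      exact Nat.eq_of_mul_eq_mul_left hN₁ h4
  · rintro ⟨h1, h2⟩
    have hAc := (cnt_const_iff N₁ M₂ hN₁ hM₂).mpr h2
    have hBc := (cnt_const_iff M₁ N₂ hM₁ hN₂).mpr h1
    refine ⟨((N₁ * cnt N₁ M₂ 0) * (M₁ * cnt M₁ N₂ 0) : ℕ) / ((N₁ * N₂ : ℕ) : ℝ), ?_, ?_⟩
    · apply div_pos
      · have := Nat.mul_pos (Nat.mul_pos hN₁ (cnt_pos N₁ M₂ 0 hM₂))
          (Nat.mul_pos hM₁ (cnt_pos M₁ N₂ 0 hN₂))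
        exact_mod_cast this
      · exact_mod_cast Nat.mul_pos hN₁ hN₂
    · ext ⟨j, l⟩ ⟨k, m⟩
      rw [key M₁ M₂ N₁ N₂ hM₁ hM₂ hN₁ hN₂ hN j l k m, Matrix.smul_apply, smul_eq_mul]
      congr 1
      rw [hAc (m : ℕ) m.isLt, hBc (k : ℕ) k.isLt]
      push_cast
      ring
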